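/- Let A be an n×n real matrix. If there exist symmetric positive definite matrices P and Q with P A + Aᵀ P + Q = 0, then the origin is an asymptotically stable equilibrium of the linear system x' = A x; in particular every solution x(t) = exp(A t) x₀ tends to 0 as t → ∞. -/

import Mathlib

open Matrix


-- derivative of the flow
lemma flow_hasDerivAt {n : ℕ} (A : Matrix (Fin n) (Fin n) ℝ) (x₀ : Fin n → ℝ) (t : ℝ) :
    HasDerivAt (fun s : ℝ => (NormedSpace.exp (s • A)).mulVec x₀)
      (A.mulVec ((NormedSpace.exp (t • A)).mulVec x₀)) t := by
  letI : SeminormedRing (Matrix (Fin n) (Fin n) ℝ) := Matrix.linftyOpSemiNormedRing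
  letI : NormedRing (Matrix (Fin n) (Fin n) ℝ) := Matrix.linftyOpNormedRing
  letI : NormedAlgebra ℝ (Matrix (Fin n) (Fin n) ℝ) := Matrix.linftyOpNormedAlgebra
  have h1 := hasDerivAt_exp_smul_const' (𝕂 := ℝ) A t
  let L : Matrix (Fin n) (Fin n) ℝ →ₗ[ℝ] (Fin n → ℝ) :=
    { toFun := fun M => M.mulVec x₀
      map_add' := fun M N => Matrix.add_mulVec M N x₀
      map_smul' := fun c M => Matrix.smul_mulVec c M x₀ }
  have h2 := (L.toContinuousLinearMap.hasFDerivAt.comp_hasDerivAt t h1)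
  rw [Matrix.mulVec_mulVec]
  exact h2

lemma quad_hasDerivAt {n : ℕ} (P : Matrix (Fin n) (Fin n) ℝ) {x : ℝ → Fin n → ℝ}
    {x' : Fin n → ℝ} {t : ℝ} (hx : HasDerivAt x x' t) :
    HasDerivAt (fun s => x s ⬝ᵥ P.mulVec (x s))
      (x' ⬝ᵥ P.mulVec (x t) + x t ⬝ᵥ P.mulVec x') t := by
  have hc : ∀ i, HasDerivAt (fun s => x s i) (x' i) t := fun i =>
    ((ContinuousLinearMap.proj (R := ℝ) (φ := fun _ : Fin n => ℝ)
      i).hasFDerivAt.comp_hasDerivAt t hx)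
  have H : HasDerivAt (fun s => ∑ i, ∑ j, x s i * (P i j * x s j))
      (∑ i, ∑ j, (x' i * (P i j * x t j) + x t i * (P i j * x' j))) t := by
    apply HasDerivAt.fun_sum
    intro i _
    apply HasDerivAt.fun_sum
    intro j _
    exact (hc i).mul ((hc j).const_mul (P i j))
  convert H using 1
  · funext s
    simp [dotProduct, Matrix.mulVec, Finset.mul_sum]
  · simp [dotProduct, Matrix.mulVec, Finset.mul_sum, Finset.sum_add_distrib]



lemma quad_upper {n : ℕ} (P : Matrix (Fin n) (Fin n) ℝ) :
    ∃ M > (0:ℝ), ∀ x : Fin n → ℝ, x ⬝ᵥ P.mulVec x ≤ M * ‖x‖ ^ 2 := by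
  refine ⟨(∑ i, ∑ j, |P i j|) + 1, by positivity, fun x => ?_⟩
  have hx : ∀ i, |x i| ≤ ‖x‖ := fun i => by
    simpa [Real.norm_eq_abs] using norm_le_pi_norm x i
  have h1 : x ⬝ᵥ P.mulVec x ≤ ∑ i, ∑ j, |x i * (P i j * x j)| := by
    calc x ⬝ᵥ P.mulVec x = ∑ i, ∑ j, x i * (P i j * x j) := by
          simp [dotProduct, Matrix.mulVec, Finset.mul_sum]
      _ ≤ ∑ i, ∑ j, |x i * (P i j * x j)| :=
          Finset.sum_le_sum fun i _ => Finset.sum_le_sum fun j _ => le_abs_self _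
  have h2 : ∑ i, ∑ j, |x i * (P i j * x j)| ≤ (∑ i, ∑ j, |P i j|) * ‖x‖ ^ 2 := by
    rw [Finset.sum_mul]
    refine Finset.sum_le_sum fun i _ => ?_
    rw [Finset.sum_mul]
    refine Finset.sum_le_sum fun j _ => ?_
    rw [abs_mul, abs_mul, sq]
    calc |x i| * (|P i j| * |x j|) = |P i j| * (|x i| * |x j|) := by ring
      _ ≤ |P i j| * (‖x‖ * ‖x‖) := by
          exact mul_le_mul_of_nonneg_left
            (mul_le_mul (hx i) (hx j) (abs_nonneg _) (norm_nonneg _)) (abs_nonneg _)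
  have h3 : (∑ i, ∑ j, |P i j|) * ‖x‖ ^ 2 ≤ ((∑ i, ∑ j, |P i j|) + 1) * ‖x‖ ^ 2 := by
    apply mul_le_mul_of_nonneg_right (by linarith) (by positivity)
  linarith

lemma quad_lower {n : ℕ} {P : Matrix (Fin n) (Fin n) ℝ} (hP : P.PosDef) :
    ∃ m > (0:ℝ), ∀ x : Fin n → ℝ, m * ‖x‖ ^ 2 ≤ x ⬝ᵥ P.mulVec x := by
  have hpos : ∀ x : Fin n → ℝ, x ≠ 0 → 0 < x ⬝ᵥ P.mulVec x := fun x hx => by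
    simpa using hP.dotProduct_mulVec_pos hx
  rcases Nat.eq_zero_or_pos n with hn | hn
  · subst hn
    refine ⟨1, one_pos, fun x => ?_⟩
    have hx0 : x = 0 := Subsingleton.elim x 0
    subst hx0
    rw [norm_zero]
    simp
  · haveI : Nonempty (Fin n) := ⟨⟨0, hn⟩⟩
    haveI : Nontrivial (Fin n → ℝ) := inferInstance
    obtain ⟨y₀, hy₀⟩ := exists_norm_eq (Fin n → ℝ) (zero_le_one' ℝ)
    have hconts : Continuous fun x : Fin n → ℝ => x ⬝ᵥ P.mulVec x := by
      have : (fun x : Fin n → ℝ => x ⬝ᵥ P.mulVec x)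
          = fun x => ∑ i, x i * ∑ j, P i j * x j := by
        funext x; simp [dotProduct, Matrix.mulVec]
      rw [this]
      exact continuous_finset_sum _ fun i _ => (continuous_apply i).mul
        (continuous_finset_sum _ fun j _ => continuous_const.mul (continuous_apply j))
    have hsph : y₀ ∈ Metric.sphere (0 : Fin n → ℝ) 1 := by
      simpa [Metric.mem_sphere, dist_zero_right] using hy₀
    obtain ⟨y, hy, hymin'⟩ := (isCompact_sphere (0 : Fin n → ℝ) 1).exists_isMinOn
      ⟨y₀, hsph⟩ hconts.continuousOn
    have hymin : ∀ z ∈ Metric.sphere (0 : Fin n → ℝ) 1, y ⬝ᵥ P.mulVec y ≤ z ⬝ᵥ P.mulVec z := fun z hz => hymin' hz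
    have hyn : ‖y‖ = 1 := by simpa [Metric.mem_sphere, dist_zero_right] using hy
    have hyne : y ≠ 0 := fun h => by simp [h] at hyn
    refine ⟨y ⬝ᵥ P.mulVec y, hpos y hyne, fun x => ?_⟩
    by_cases hx : x = 0
    · simp [hx]
    · set c : ℝ := ‖x‖⁻¹ with hc
      have hxn : 0 < ‖x‖ := norm_pos_iff.mpr hx
      have hu : ‖c • x‖ = 1 := by
        rw [norm_smul, Real.norm_eq_abs, hc, abs_of_pos (by positivity)]
        field_simp
      have husph : c • x ∈ Metric.sphere (0 : Fin n → ℝ) 1 := by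
        simpa [Metric.mem_sphere, dist_zero_right] using hu
      have h1 := hymin (c • x) husph
      have h2 : (c • x) ⬝ᵥ P.mulVec (c • x) = c ^ 2 * (x ⬝ᵥ P.mulVec x) := by
        rw [Matrix.mulVec_smul, smul_dotProduct, dotProduct_smul]
        simp [sq, mul_assoc]
      rw [h2] at h1
      have hc2 : c ^ 2 = (‖x‖ ^ 2)⁻¹ := by rw [hc]; field_simp
      rw [hc2] at h1
      have := mul_le_mul_of_nonneg_right h1 (le_of_lt (by positivity : (0:ℝ) < ‖x‖ ^ 2))
      calc (y ⬝ᵥ P.mulVec y) * ‖x‖ ^ 2 ≤ (‖x‖ ^ 2)⁻¹ * (x ⬝ᵥ P.mulVec x) * ‖x‖ ^ 2 := this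
        _ = x ⬝ᵥ P.mulVec x := by field_simp

lemma lyap_identity {n : ℕ} {A P Q : Matrix (Fin n) (Fin n) ℝ}
    (hPQ : P * A + Aᵀ * P + Q = 0) (v : Fin n → ℝ) :
    (A.mulVec v) ⬝ᵥ P.mulVec v + v ⬝ᵥ P.mulVec (A.mulVec v)
      = -(v ⬝ᵥ Q.mulVec v) := by
  have h1 : (A.mulVec v) ⬝ᵥ P.mulVec v = v ⬝ᵥ (Aᵀ * P).mulVec v := by
    rw [← Matrix.mulVec_mulVec, Matrix.dotProduct_mulVec v, Matrix.vecMul_transpose]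
  have h2 : v ⬝ᵥ P.mulVec (A.mulVec v) = v ⬝ᵥ (P * A).mulVec v := by
    rw [Matrix.mulVec_mulVec]
  have h3 : Aᵀ * P + P * A = -Q := by
    have h : Aᵀ * P + P * A + Q = 0 := by rw [← hPQ]; abel
    exact eq_neg_of_add_eq_zero_left h
  rw [h1, h2, ← dotProduct_add, ← Matrix.add_mulVec, h3, Matrix.neg_mulVec,
    dotProduct_neg]

private lemma lyap_main {n : ℕ} (A : Matrix (Fin n) (Fin n) ℝ)
    (P Q : Matrix (Fin n) (Fin n) ℝ) (hP : P.PosDef) (hQ : Q.PosDef)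
    (hPQ : P * A + Aᵀ * P + Q = 0)
    -- aux facts as hypotheses for now
    (flow_hasDerivAt : ∀ (x₀ : Fin n → ℝ) (t : ℝ),
      HasDerivAt (fun s : ℝ => (NormedSpace.exp (s • A)).mulVec x₀)
        (A.mulVec ((NormedSpace.exp (t • A)).mulVec x₀)) t)
    (quad_hasDerivAt : ∀ (x : ℝ → Fin n → ℝ) (x' : Fin n → ℝ) (t : ℝ),
      HasDerivAt x x' t →
      HasDerivAt (fun s => x s ⬝ᵥ P.mulVec (x s))
        (x' ⬝ᵥ P.mulVec (x t) + x t ⬝ᵥ P.mulVec x') t)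
    (lyap_identity : ∀ v : Fin n → ℝ,
      (A.mulVec v) ⬝ᵥ P.mulVec v + v ⬝ᵥ P.mulVec (A.mulVec v) = -(v ⬝ᵥ Q.mulVec v))
    (mP MP mQ : ℝ) (hmP : 0 < mP) (hMP : 0 < MP) (hmQ : 0 < mQ)
    (hlow : ∀ x : Fin n → ℝ, mP * ‖x‖ ^ 2 ≤ x ⬝ᵥ P.mulVec x)
    (hupP : ∀ x : Fin n → ℝ, x ⬝ᵥ P.mulVec x ≤ MP * ‖x‖ ^ 2)
    (hlowQ : ∀ x : Fin n → ℝ, mQ * ‖x‖ ^ 2 ≤ x ⬝ᵥ Q.mulVec x) :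
    (∀ ε > (0 : ℝ), ∃ δ > (0 : ℝ), ∀ x₀ : Fin n → ℝ, ‖x₀‖ < δ → ∀ t : ℝ, 0 ≤ t →
        ‖(NormedSpace.exp (t • A)).mulVec x₀‖ < ε) ∧
    ∀ x₀ : Fin n → ℝ,
      Filter.Tendsto (fun t : ℝ => (NormedSpace.exp (t • A)).mulVec x₀)
        Filter.atTop (nhds 0) := by
  set c : ℝ := mQ / MP with hc
  have hcpos : 0 < c := div_pos hmQ hMP
  -- comparison: c * (vᵀPv) ≤ vᵀQv
  have hcomp : ∀ v : Fin n → ℝ, c * (v ⬝ᵥ P.mulVec v) ≤ v ⬝ᵥ Q.mulVec v := by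
    intro v
    have h1 : c * (v ⬝ᵥ P.mulVec v) ≤ c * (MP * ‖v‖ ^ 2) :=
      mul_le_mul_of_nonneg_left (hupP v) hcpos.le
    have h2 : c * (MP * ‖v‖ ^ 2) = mQ * ‖v‖ ^ 2 := by
      rw [hc]; field_simp
    linarith [hlowQ v]
  -- per-initial-condition analysis
  have key : ∀ x₀ : Fin n → ℝ, ∀ t : ℝ, 0 ≤ t →
      mP * ‖(NormedSpace.exp (t • A)).mulVec x₀‖ ^ 2
        ≤ (x₀ ⬝ᵥ P.mulVec x₀) * Real.exp (-(c * t)) ∧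
      mP * ‖(NormedSpace.exp (t • A)).mulVec x₀‖ ^ 2 ≤ MP * ‖x₀‖ ^ 2 := by
    intro x₀
    set x : ℝ → Fin n → ℝ := fun s => (NormedSpace.exp (s • A)).mulVec x₀ with hxdef
    set V : ℝ → ℝ := fun s => x s ⬝ᵥ P.mulVec (x s) with hVdef
    have hx0 : x 0 = x₀ := by
      simp [hxdef, NormedSpace.exp_zero]
    have hVderiv : ∀ t : ℝ, HasDerivAt V (-(x t ⬝ᵥ Q.mulVec (x t))) t := by
      intro t
      have h := quad_hasDerivAt x (A.mulVec (x t)) t (flow_hasDerivAt x₀ t)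
      rwa [lyap_identity (x t)] at h
    set g : ℝ → ℝ := fun s => V s * Real.exp (c * s) with hgdef
    have hgderiv : ∀ t : ℝ, HasDerivAt g
        ((-(x t ⬝ᵥ Q.mulVec (x t)) + c * V t) * Real.exp (c * t)) t := by
      intro t
      have he : HasDerivAt (fun s : ℝ => Real.exp (c * s)) (Real.exp (c * t) * c) t := by
        simpa using ((hasDerivAt_id t).const_mul c).exp
      have := (hVderiv t).fun_mul he
      refine this.congr_deriv ?_
      ring
    have hgmono : ∀ t : ℝ, 0 ≤ t → g t ≤ g 0 := by
      have hanti : Antitone g := by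
        apply antitone_of_deriv_nonpos
        · exact fun t => (hgderiv t).differentiableAt
        · intro t
          rw [(hgderiv t).deriv]
          have h1 : c * V t ≤ x t ⬝ᵥ Q.mulVec (x t) := hcomp (x t)
          have h2 : (0:ℝ) < Real.exp (c * t) := Real.exp_pos _
          nlinarith
      exact fun t ht => hanti ht
    have hVpos : ∀ s : ℝ, 0 ≤ V s := by
      intro s
      simpa [hVdef] using hP.posSemidef.dotProduct_mulVec_nonneg (x s)
    intro t ht
    have hg0 : g 0 = x₀ ⬝ᵥ P.mulVec x₀ := by simp [hgdef, hVdef, hx0]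
    have hgt := hgmono t ht
    rw [hg0] at hgt
    constructor
    · -- decay bound
      have h1 : V t ≤ (x₀ ⬝ᵥ P.mulVec x₀) * Real.exp (-(c * t)) := by
        have hepos : (0:ℝ) < Real.exp (c * t) := Real.exp_pos _
        rw [Real.exp_neg, ← div_eq_mul_inv, le_div_iff₀ hepos]
        exact hgt
      calc mP * ‖x t‖ ^ 2 ≤ V t := hlow (x t)
        _ ≤ _ := h1
    · -- uniform bound
      have hone : (1:ℝ) ≤ Real.exp (c * t) := by
        rw [← Real.exp_zero]
        exact Real.exp_le_exp.mpr (by positivity)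
      have h2 : V t ≤ g t := by
        have := mul_le_mul_of_nonneg_left hone (hVpos t)
        simpa [hgdef] using this
      calc mP * ‖x t‖ ^ 2 ≤ V t := hlow (x t)
        _ ≤ g t := h2
        _ ≤ x₀ ⬝ᵥ P.mulVec x₀ := hgt
        _ ≤ MP * ‖x₀‖ ^ 2 := hupP x₀
  constructor
  · -- stability
    intro ε hε
    refine ⟨ε * Real.sqrt (mP / MP), by positivity, fun x₀ hx₀ t ht => ?_⟩
    have h := (key x₀ t ht).2
    have hδ2 : (ε * Real.sqrt (mP / MP)) ^ 2 = ε ^ 2 * (mP / MP) := by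
      rw [mul_pow, Real.sq_sqrt (by positivity)]
    have hx₀2 : ‖x₀‖ ^ 2 < ε ^ 2 * (mP / MP) := by
      rw [← hδ2]
      exact pow_lt_pow_left₀ hx₀ (norm_nonneg _) (by norm_num)
    have h3 : mP * ‖(NormedSpace.exp (t • A)).mulVec x₀‖ ^ 2 < mP * ε ^ 2 := by
      calc mP * ‖(NormedSpace.exp (t • A)).mulVec x₀‖ ^ 2 ≤ MP * ‖x₀‖ ^ 2 := h
        _ < MP * (ε ^ 2 * (mP / MP)) := by
            exact mul_lt_mul_of_pos_left hx₀2 hMP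
        _ = mP * ε ^ 2 := by field_simp
    have h4 : ‖(NormedSpace.exp (t • A)).mulVec x₀‖ ^ 2 < ε ^ 2 :=
      lt_of_mul_lt_mul_left h3 hmP.le
    exact lt_of_pow_lt_pow_left₀ 2 hε.le h4
  · -- convergence
    intro x₀
    rw [tendsto_zero_iff_norm_tendsto_zero]
    have hsq : Filter.Tendsto (fun t : ℝ => ‖(NormedSpace.exp (t • A)).mulVec x₀‖ ^ 2)
        Filter.atTop (nhds 0) := by
      apply squeeze_zero' (Filter.Eventually.of_forall fun t => by positivity)
      · filter_upwards [Filter.eventually_ge_atTop (0:ℝ)] with t ht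
        have h := (key x₀ t ht).1
        have : ‖(NormedSpace.exp (t • A)).mulVec x₀‖ ^ 2
            ≤ (x₀ ⬝ᵥ P.mulVec x₀) / mP * Real.exp (-(c * t)) := by
          rw [div_mul_eq_mul_div, le_div_iff₀ hmP]
          nlinarith
        exact this
      · have htop : Filter.Tendsto (fun t : ℝ => -(c * t)) Filter.atTop Filter.atBot := by
          apply Filter.tendsto_neg_atBot_iff.mpr
          exact Filter.Tendsto.const_mul_atTop hcpos Filter.tendsto_id
        have := Real.tendsto_exp_atBot.comp htop
        have h2 := this.const_mul ((x₀ ⬝ᵥ P.mulVec x₀) / mP)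
        simpa using h2
    have := (Real.continuous_sqrt.tendsto 0).comp hsq
    simp only [Function.comp_def, Real.sqrt_zero] at this
    convert this using 2 with t
    rw [Real.sqrt_sq (norm_nonneg _)]

theorem lyapunov_implies_asymptotic_stability {n : ℕ} (A : Matrix (Fin n) (Fin n) ℝ)
    (h : ∃ P Q : Matrix (Fin n) (Fin n) ℝ, P.PosDef ∧ Q.PosDef ∧
      P * A + Aᵀ * P + Q = 0) :
    (∀ ε > (0 : ℝ), ∃ δ > (0 : ℝ), ∀ x₀ : Fin n → ℝ, ‖x₀‖ < δ → ∀ t : ℝ, 0 ≤ t →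
        ‖(NormedSpace.exp (t • A)).mulVec x₀‖ < ε) ∧
    ∀ x₀ : Fin n → ℝ,
      Filter.Tendsto (fun t : ℝ => (NormedSpace.exp (t • A)).mulVec x₀)
        Filter.atTop (nhds 0) := by
  obtain ⟨P, Q, hP, hQ, hPQ⟩ := h
  obtain ⟨mP, hmP, hlow⟩ := quad_lower hP
  obtain ⟨MP, hMP, hupP⟩ := quad_upper P
  obtain ⟨mQ, hmQ, hlowQ⟩ := quad_lower hQ
  exact lyap_main A P Q hP hQ hPQ (flow_hasDerivAt A)
    (fun x x' t hx => quad_hasDerivAt P hx) (lyap_identity hPQ)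
    mP MP mQ hmP hMP hmQ hlow hupP hlowQ
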